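/- For any poset (X, ≤), any word w in X*, and any finite set S of positive integers, the number of words w' equivalent to w (in the partially commutative monoid sense) with DES(w') = S equals the number of words w' equivalent to w with ASC(w') = S. -/

import Mathlib

/-- Adjacency in the free monoid over a poset: swap of two adjacent,
distinct and comparable letters. -/
inductive PCM.Adj {X : Type*} [PartialOrder X] : List X → List X → Prop
  | swap (u v : List X) (a b : X) (hne : a ≠ b) (hcomp : a ≤ b ∨ b ≤ a) :
      PCM.Adj (u ++ a :: b :: v) (u ++ b :: a :: v)

/-- Equivalence in the partially commutative monoid `L(X, ≤)`. -/
def PCM.Equiv {X : Type*} [PartialOrder X] (w w' : List X) : Prop :=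
  Relation.ReflTransGen PCM.Adj w w'

/-- Descent set: positions `i`, `1 ≤ i ≤ n-1`, with `x_i > x_{i+1}`. -/
def PCM.DES {X : Type*} [PartialOrder X] (w : List X) : Set ℕ :=
  {i | ∃ h : i < w.length, 0 < i ∧ w[i]'h < w[i - 1]'(by omega)}

/-- Rise set: positions `i`, `1 ≤ i ≤ n-1`, with `x_i < x_{i+1}`. -/
def PCM.ASC {X : Type*} [PartialOrder X] (w : List X) : Set ℕ :=
  {i | ∃ h : i < w.length, 0 < i ∧ w[i - 1]'(by omega) < w[i]'h}

namespace PCMProof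
open Relation

attribute [local instance] Classical.propDecidable

variable {X : Type*} [PartialOrder X]

/-- Bundled hypotheses on a strict-order-like relation. -/
structure LTOK (lt : X → X → Prop) : Prop where
  trans : ∀ {a b c}, lt a b → lt b c → lt a c
  asymm : ∀ {a b}, lt a b → ¬ lt b a
  ne : ∀ {a b}, lt a b → a ≠ b
  comp : ∀ {a b}, lt a b → a ≤ b ∨ b ≤ a
  total : ∀ {a b : X}, a ≠ b → (a ≤ b ∨ b ≤ a) → lt a b ∨ lt b a

theorem ltok_lt : LTOK ((· < ·) : X → X → Prop) where
  trans := lt_trans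
  asymm := fun h => lt_asymm h
  ne := fun h => ne_of_lt h
  comp := fun h => Or.inl h.le
  total := by
    intro a b hne hc
    rcases hc with h | h
    · exact Or.inl (lt_of_le_of_ne h hne)
    · exact Or.inr (lt_of_le_of_ne h (Ne.symm hne))

theorem ltok_gt : LTOK (fun a b : X => b < a) where
  trans := fun h1 h2 => lt_trans h2 h1
  asymm := fun h => lt_asymm h
  ne := fun h => (ne_of_lt h).symm
  comp := fun h => Or.inr h.le
  total := by
    intro a b hne hc
    rcases hc with h | h
    · exact Or.inr (lt_of_le_of_ne h hne)
    · exact Or.inl (lt_of_le_of_ne h (Ne.symm hne))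

/-- Restricted adjacency: swap at an allowed position. -/
inductive AdjA (A : ℕ → Prop) : List X → List X → Prop
  | swap (u v : List X) (a b : X) (hne : a ≠ b) (hcomp : a ≤ b ∨ b ≤ a)
      (hA : A (u.length + 1)) :
      AdjA A (u ++ a :: b :: v) (u ++ b :: a :: v)

/-- One rewriting step: fix an `lt`-inversion at an allowed position. -/
inductive Step (lt : X → X → Prop) (A : ℕ → Prop) : List X → List X → Prop
  | swap (u v : List X) (a b : X) (h : lt b a) (hA : A (u.length + 1)) :
      Step lt A (u ++ a :: b :: v) (u ++ b :: a :: v)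

/-- Number of `lt`-inversions. -/
noncomputable def inv (lt : X → X → Prop) : List X → ℕ
  | [] => 0
  | a :: t => t.countP (fun x => decide (lt x a)) + inv lt t

theorem inv_append (lt : X → X → Prop) (u t : List X) :
    inv lt (u ++ t) =
      inv lt u + (u.map fun a => t.countP (fun x => decide (lt x a))).sum + inv lt t := by
  induction u with
  | nil => simp [inv]
  | cons a u ih =>
      have h1 : inv lt ((a :: u) ++ t) = (u ++ t).countP (fun x => decide (lt x a)) + inv lt (u ++ t) := rfl
      have h2 : inv lt (a :: u) = u.countP (fun x => decide (lt x a)) + inv lt u := rfl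
      rw [h1, List.countP_append, ih, h2]
      simp only [List.map_cons, List.sum_cons]
      omega

theorem Step.inv_lt {lt : X → X → Prop} {A : ℕ → Prop} (hlt : LTOK lt)
    {l l' : List X} (h : Step lt A l l') : inv lt l' + 1 = inv lt l := by
  rcases h with ⟨u, v, a, b, h, hA⟩
  have hperm : (b :: a :: v).Perm (a :: b :: v) := List.Perm.swap a b v
  rw [inv_append, inv_append]
  have hmap : ∀ c : X, (b :: a :: v).countP (fun x => decide (lt x c))
      = (a :: b :: v).countP (fun x => decide (lt x c)) := fun c => hperm.countP_eq _
  simp only [hmap]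
  have h1 : inv lt (b :: a :: v) + 1 = inv lt (a :: b :: v) := by
    simp only [inv, List.countP_cons]
    have hba : (decide (lt b a) : Bool) = true := by simp [h]
    have hab : (decide (lt a b) : Bool) = false := by simp [hlt.asymm h]
    rw [hba, hab]
    simp
    omega
  omega

/-- Normal form predicate. -/
def NFp (lt : X → X → Prop) (A : ℕ → Prop) (l : List X) : Prop := ∀ l', ¬ Step lt A l l'

theorem nf_iff {lt : X → X → Prop} {A : ℕ → Prop} {l : List X} :
    NFp lt A l ↔ ∀ (i : ℕ) (h : i < l.length), 0 < i → A i →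
      ¬ lt (l[i]'h) (l[i - 1]'(by omega)) := by
  constructor
  · intro hnf i h hi hA hlt
    refine hnf (l.take (i-1) ++ (l[i]'h) :: (l[i-1]'(by omega)) :: l.drop (i+1)) ?_
    have hdec : l = l.take (i-1) ++ (l[i-1]'(by omega)) :: (l[i]'h) :: l.drop (i+1) := by
      conv_lhs => rw [← List.take_append_drop (i-1) l]
      congr 1
      rw [List.drop_eq_getElem_cons (by omega)]
      congr 1
      have : i - 1 + 1 = i := by omega
      rw [this, List.drop_eq_getElem_cons h]
    have hlen : (l.take (i-1)).length = i - 1 := by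
      rw [List.length_take]; omega
    have hA' : A ((l.take (i-1)).length + 1) := by
      rw [hlen]; have : i - 1 + 1 = i := by omega
      rw [this]; exact hA
    conv_lhs => rw [hdec]
    exact Step.swap _ _ _ _ hlt hA'
  · intro hp l' hstep
    rcases hstep with ⟨u, v, a, b, h, hA⟩
    have h1 : u.length + 1 < (u ++ a :: b :: v).length := by
      simp
    refine hp (u.length + 1) h1 (by omega) hA ?_
    simpa [List.getElem_append_right] using h

section Newman
variable {α : Type*} {r : α → α → Prop} {m : α → ℕ}

theorem newman_aux (hd : ∀ a b, r a b → m b < m a)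
    (hlc : ∀ a b c, r a b → r a c → Join (ReflTransGen r) b c) :
    ∀ n a, m a ≤ n → ∀ b c, ReflTransGen r a b → ReflTransGen r a c →
      Join (ReflTransGen r) b c := by
  intro n
  induction n using Nat.strong_induction_on with
  | _ n IH =>
    intro a hm b c hab hac
    rcases hab.cases_head with rfl | ⟨b₁, hab₁, hb₁b⟩
    · exact ⟨c, hac, ReflTransGen.refl⟩
    rcases hac.cases_head with rfl | ⟨c₁, hac₁, hc₁c⟩
    · exact ⟨b, ReflTransGen.refl, hab⟩
    obtain ⟨d, hbd, hcd⟩ := hlc a b₁ c₁ hab₁ hac₁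
    have hb₁ : m b₁ < n := lt_of_lt_of_le (hd _ _ hab₁) hm
    have hc₁ : m c₁ < n := lt_of_lt_of_le (hd _ _ hac₁) hm
    obtain ⟨e, hbe, hde⟩ := IH (m b₁) hb₁ b₁ le_rfl b d hb₁b hbd
    obtain ⟨f, hcf, hef⟩ := IH (m c₁) hc₁ c₁ le_rfl c e hc₁c (hcd.trans hde)
    exact ⟨f, hbe.trans hef, hcf⟩

theorem newman (hd : ∀ a b, r a b → m b < m a)
    (hlc : ∀ a b c, r a b → r a c → Join (ReflTransGen r) b c)
    {a b c : α} (hab : ReflTransGen r a b) (hac : ReflTransGen r a c) :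
    Join (ReflTransGen r) b c :=
  newman_aux hd hlc (m a) a le_rfl b c hab hac

end Newman

set_option linter.unusedSectionVars false

/-- Local confluence, ordered case. -/
theorem step_local_confl_aux {lt : X → X → Prop} {A : ℕ → Prop} (hlt : LTOK lt)
    {u₁ v₁ u₂ v₂ : List X} {a₁ b₁ a₂ b₂ : X}
    (heq : u₁ ++ a₁ :: b₁ :: v₁ = u₂ ++ a₂ :: b₂ :: v₂) (hle : u₁.length ≤ u₂.length)
    (hl1 : lt b₁ a₁) (hl2 : lt b₂ a₂) (hA1 : A (u₁.length + 1)) (hA2 : A (u₂.length + 1)) :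
    Join (ReflTransGen (Step lt A)) (u₁ ++ b₁ :: a₁ :: v₁) (u₂ ++ b₂ :: a₂ :: v₂) := by
  obtain ⟨m, hm1, hm2⟩ : ∃ m, u₂ = u₁ ++ m ∧ a₁ :: b₁ :: v₁ = m ++ a₂ :: b₂ :: v₂ := by
    rcases List.append_eq_append_iff.mp heq with ⟨m, hm⟩ | ⟨m, hm⟩
    · exact ⟨m, hm⟩
    · have : m.length = 0 := by
        have h1 := congrArg List.length hm.1
        simp at h1; omega
      rw [List.length_eq_zero_iff] at this
      subst this
      exact ⟨[], by simpa using hm.1.symm, by simp [hm.2]⟩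
  match m, hm1, hm2 with
  | [], hm1, hm2 =>
    simp at hm1 hm2
    obtain ⟨rfl, rfl, rfl⟩ := hm2
    subst hm1
    exact ⟨_, ReflTransGen.refl, ReflTransGen.refl⟩
  | [x], hm1, hm2 =>
    simp at hm2
    obtain ⟨rfl, rfl, rfl⟩ := hm2
    subst hm1
    -- letters: a₁ > b₁ = a₂ > b₂ ; chains of three
    have hac : lt b₂ a₁ := hlt.trans hl2 hl1
    have hA2' : A (u₁.length + 1 + 1) := by simpa using hA2
    refine ⟨u₁ ++ b₂ :: b₁ :: a₁ :: v₂, ?_, ?_⟩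
    · -- from u₁ ++ b₁ :: a₁ :: b₂ :: v₂
      have s1 : Step lt A (u₁ ++ b₁ :: a₁ :: b₂ :: v₂) (u₁ ++ b₁ :: b₂ :: a₁ :: v₂) := by
        have := Step.swap (u₁ ++ [b₁]) v₂ a₁ b₂ hac (by simpa using hA2')
        simpa using this
      have s2 : Step lt A (u₁ ++ b₁ :: b₂ :: a₁ :: v₂) (u₁ ++ b₂ :: b₁ :: a₁ :: v₂) := by
        have := Step.swap u₁ (a₁ :: v₂) b₁ b₂ hl2 hA1
        simpa using this
      exact ReflTransGen.head s1 (ReflTransGen.single s2)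
    · -- from (u₁ ++ [a₁]) ++ b₂ :: b₁ :: v₂ = u₁ ++ a₁ :: b₂ :: b₁ :: v₂
      have s3 : Step lt A (u₁ ++ a₁ :: b₂ :: b₁ :: v₂) (u₁ ++ b₂ :: a₁ :: b₁ :: v₂) :=
        Step.swap u₁ (b₁ :: v₂) a₁ b₂ hac hA1
      have s4 : Step lt A (u₁ ++ b₂ :: a₁ :: b₁ :: v₂) (u₁ ++ b₂ :: b₁ :: a₁ :: v₂) := by
        have := Step.swap (u₁ ++ [b₂]) v₂ a₁ b₁ hl1 (by simpa using hA2')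
        simpa using this
      have hch : ReflTransGen (Step lt A) (u₁ ++ a₁ :: b₂ :: b₁ :: v₂)
          (u₁ ++ b₂ :: b₁ :: a₁ :: v₂) := ReflTransGen.head s3 (ReflTransGen.single s4)
      simpa using hch
  | x :: y :: m', hm1, hm2 =>
    simp at hm2
    obtain ⟨rfl, rfl, rfl⟩ := hm2
    subst hm1
    refine ⟨u₁ ++ b₁ :: a₁ :: m' ++ b₂ :: a₂ :: v₂, ?_, ?_⟩
    · have := Step.swap (u₁ ++ b₁ :: a₁ :: m') v₂ a₂ b₂ hl2 (by simpa using hA2)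
      exact ReflTransGen.single (by simpa using this)
    · have := Step.swap u₁ (m' ++ b₂ :: a₂ :: v₂) a₁ b₁ hl1 hA1
      exact ReflTransGen.single (by simpa using this)

theorem Step.exists_decomp {lt : X → X → Prop} {A : ℕ → Prop} {l l' : List X}
    (h : Step lt A l l') : ∃ u v a b, lt b a ∧ A (u.length + 1) ∧
      l = u ++ a :: b :: v ∧ l' = u ++ b :: a :: v := by
  rcases h with ⟨u, v, a, b, h, hA⟩
  exact ⟨u, v, a, b, h, hA, rfl, rfl⟩

theorem step_local_confl {lt : X → X → Prop} {A : ℕ → Prop} (hlt : LTOK lt)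
    {l b c : List X} (h1 : Step lt A l b) (h2 : Step lt A l c) :
    Join (ReflTransGen (Step lt A)) b c := by
  obtain ⟨u₁, v₁, a₁, b₁, hl1, hA1, rfl, rfl⟩ := h1.exists_decomp
  obtain ⟨u₂, v₂, a₂, b₂, hl2, hA2, heq, rfl⟩ := h2.exists_decomp
  rcases le_total u₁.length u₂.length with hle | hle
  · exact step_local_confl_aux hlt heq hle hl1 hl2 hA1 hA2
  · obtain ⟨d, hd1, hd2⟩ := step_local_confl_aux hlt heq.symm hle hl2 hl1 hA2 hA1
    exact ⟨d, hd2, hd1⟩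

theorem step_confl {lt : X → X → Prop} {A : ℕ → Prop} (hlt : LTOK lt)
    {l b c : List X} (h1 : ReflTransGen (Step lt A) l b)
    (h2 : ReflTransGen (Step lt A) l c) : Join (ReflTransGen (Step lt A)) b c :=
  newman (m := inv lt) (fun _ _ h => by have := h.inv_lt hlt; omega)
    (fun _ _ _ ha hb => step_local_confl hlt ha hb) h1 h2

theorem exists_nf {lt : X → X → Prop} {A : ℕ → Prop} (hlt : LTOK lt) (l : List X) :
    ∃ l', ReflTransGen (Step lt A) l l' ∧ NFp lt A l' := by
  by_cases h : NFp lt A l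
  · exact ⟨l, ReflTransGen.refl, h⟩
  · simp only [NFp, not_forall, not_not] at h
    obtain ⟨l'', hstep⟩ := h
    have : inv lt l'' < inv lt l := by have := hstep.inv_lt hlt; omega
    obtain ⟨l', h1, h2⟩ := exists_nf hlt l''
    exact ⟨l', ReflTransGen.head hstep h1, h2⟩
termination_by inv lt l
decreasing_by exact this

/-- The normal form function. -/
noncomputable def nfFun {lt : X → X → Prop} {A : ℕ → Prop} (hlt : LTOK lt) (l : List X) :
    List X := (exists_nf (A := A) hlt l).choose

theorem nfFun_spec {lt : X → X → Prop} {A : ℕ → Prop} (hlt : LTOK lt) (l : List X) :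
    ReflTransGen (Step lt A) l (nfFun (A := A) hlt l) ∧ NFp lt A (nfFun (A := A) hlt l) :=
  (exists_nf (A := A) hlt l).choose_spec

theorem rtg_of_nf {lt : X → X → Prop} {A : ℕ → Prop} {l d : List X} (hnf : NFp lt A l)
    (h : ReflTransGen (Step lt A) l d) : l = d := by
  rcases h.cases_head with rfl | ⟨l₁, hstep, _⟩
  · rfl
  · exact absurd hstep (hnf l₁)

/-- Bridging: AdjA vs Step. -/
theorem adjA_iff_step {lt : X → X → Prop} {A : ℕ → Prop} (hlt : LTOK lt) {l l' : List X} :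
    AdjA A l l' ↔ (Step lt A l l' ∨ Step lt A l' l) := by
  constructor
  · rintro ⟨u, v, a, b, hne, hcomp, hA⟩
    rcases hlt.total hne hcomp with h | h
    · exact Or.inr (Step.swap u v b a h hA)
    · exact Or.inl (Step.swap u v a b h hA)
  · rintro (⟨u, v, a, b, h, hA⟩ | ⟨u, v, a, b, h, hA⟩)
    · exact AdjA.swap u v a b (hlt.ne h).symm (hlt.comp h).symm hA
    · exact AdjA.swap u v b a (hlt.ne h) (hlt.comp h) hA

theorem eqvGen_of_rtg_step {lt : X → X → Prop} {A : ℕ → Prop} (hlt : LTOK lt) {l l' : List X}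
    (h : ReflTransGen (Step lt A) l l') : EqvGen (AdjA A) l l' := by
  induction h with
  | refl => exact EqvGen.refl _
  | tail _ hstep ih =>
      exact EqvGen.trans _ _ _ ih (EqvGen.rel _ _ ((adjA_iff_step hlt).mpr (Or.inl hstep)))

theorem eqvGen_to_join {lt : X → X → Prop} {A : ℕ → Prop} (hlt : LTOK lt) {l l' : List X}
    (h : EqvGen (AdjA A) l l') : Join (ReflTransGen (Step lt A)) l l' := by
  induction h with
  | rel x y hxy =>
      rcases (adjA_iff_step hlt).mp hxy with h | h
      · exact ⟨y, ReflTransGen.single h, ReflTransGen.refl⟩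
      · exact ⟨x, ReflTransGen.refl, ReflTransGen.single h⟩
  | refl x => exact ⟨x, ReflTransGen.refl, ReflTransGen.refl⟩
  | symm x y _ ih => exact ⟨ih.choose, ih.choose_spec.2, ih.choose_spec.1⟩
  | trans x y z _ _ ih1 ih2 =>
      obtain ⟨d, hxd, hyd⟩ := ih1
      obtain ⟨e, hye, hze⟩ := ih2
      obtain ⟨f, hdf, hef⟩ := step_confl hlt hyd hye
      exact ⟨f, hxd.trans hdf, hze.trans hef⟩

theorem nf_unique {lt : X → X → Prop} {A : ℕ → Prop} (hlt : LTOK lt) {l₁ l₂ : List X}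
    (h : EqvGen (AdjA A) l₁ l₂) (h1 : NFp lt A l₁) (h2 : NFp lt A l₂) : l₁ = l₂ := by
  obtain ⟨d, hd1, hd2⟩ := eqvGen_to_join hlt h
  rw [rtg_of_nf h1 hd1, rtg_of_nf h2 hd2]

theorem adj_symm {l l' : List X} (h : PCM.Adj l l') : PCM.Adj l' l := by
  rcases h with ⟨u, v, a, b, hne, hcomp⟩
  exact PCM.Adj.swap u v b a hne.symm hcomp.symm

theorem equiv_trans {w₁ w₂ w₃ : List X} (h1 : PCM.Equiv w₁ w₂) (h2 : PCM.Equiv w₂ w₃) :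
    PCM.Equiv w₁ w₃ := ReflTransGen.trans h1 h2

theorem equiv_symm {w₁ w₂ : List X} (h : PCM.Equiv w₁ w₂) : PCM.Equiv w₂ w₁ :=
  haveI : Std.Symm (PCM.Adj (X := X)) := ⟨fun _ _ => adj_symm⟩
  (Relation.ReflTransGen.stdSymm (r := PCM.Adj)).symm _ _ h

theorem equiv_of_eqvGen {A : ℕ → Prop} {l l' : List X} (h : EqvGen (AdjA A) l l') :
    PCM.Equiv l l' := by
  induction h with
  | rel x y hxy =>
      rcases hxy with ⟨u, v, a, b, hne, hcomp, _⟩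
      exact ReflTransGen.single (PCM.Adj.swap u v a b hne hcomp)
  | refl x => exact ReflTransGen.refl
  | symm x y _ ih => exact equiv_symm ih
  | trans x y z _ _ ih1 ih2 => exact equiv_trans ih1 ih2

theorem equiv_perm {w w' : List X} (h : PCM.Equiv w w') : w.Perm w' := by
  induction h with
  | refl => exact List.Perm.refl _
  | tail _ hadj ih =>
      refine ih.trans ?_
      rcases hadj with ⟨u, v, a, b, _, _⟩
      exact List.Perm.append_left u (List.Perm.swap b a v)

theorem equivClass_finite (w : List X) : {w' : List X | PCM.Equiv w w'}.Finite := by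
  refine Set.Finite.subset (w.permutations.toFinset : Finset (List X)).finite_toSet ?_
  intro w' hw'
  simp only [Finset.coe_sort_coe, List.coe_toFinset, Set.mem_setOf_eq, List.mem_permutations]
  exact (equiv_perm hw').symm

theorem des_subset_iff (T : Finset ℕ) (l : List X) :
    PCM.DES l ⊆ ↑T ↔ NFp (· < ·) (fun i => i ∉ T) l := by
  rw [nf_iff]
  constructor
  · intro hsub i h hi hA hlt
    exact hA (hsub ⟨h, hi, hlt⟩)
  · intro hp i hi
    obtain ⟨h, h0, hlt⟩ := hi
    by_contra hiT
    exact hp i h h0 hiT hlt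

theorem asc_subset_iff (T : Finset ℕ) (l : List X) :
    PCM.ASC l ⊆ ↑T ↔ NFp (fun a b : X => b < a) (fun i => i ∉ T) l := by
  rw [nf_iff]
  constructor
  · intro hsub i h hi hA hlt
    exact hA (hsub ⟨h, hi, hlt⟩)
  · intro hp i hi
    obtain ⟨h, h0, hlt⟩ := hi
    by_contra hiT
    exact hp i h h0 hiT hlt

theorem count_sub (w : List X) (T : Finset ℕ) :
    {w' : List X | PCM.Equiv w w' ∧ PCM.DES w' ⊆ ↑T}.ncard
      = {w' : List X | PCM.Equiv w w' ∧ PCM.ASC w' ⊆ ↑T}.ncard := by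
  classical
  set A : ℕ → Prop := fun i => i ∉ T with hA
  set lt₁ : X → X → Prop := (· < ·) with hlt₁
  set lt₂ : X → X → Prop := fun a b => b < a with hlt₂
  set S1 := {w' : List X | PCM.Equiv w w' ∧ PCM.DES w' ⊆ ↑T} with hS1
  set S2 := {w' : List X | PCM.Equiv w w' ∧ PCM.ASC w' ⊆ ↑T} with hS2
  set Φ : List X → List X := fun l => nfFun (A := A) (ltok_gt (X := X)) l with hΦ
  have hbij : Set.BijOn Φ S1 S2 := by
    refine ⟨?_, ?_, ?_⟩
    · -- maps to
      rintro w' ⟨hw', hdes⟩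
      have hspec := nfFun_spec (A := A) (ltok_gt (X := X)) w'
      constructor
      · exact equiv_trans hw' (equiv_of_eqvGen (eqvGen_of_rtg_step ltok_gt hspec.1))
      · exact (asc_subset_iff T _).mpr hspec.2
    · -- injective
      rintro w₁ ⟨hw₁, hd₁⟩ w₂ ⟨hw₂, hd₂⟩ heq
      have h1 := nfFun_spec (A := A) (ltok_gt (X := X)) w₁
      have h2 := nfFun_spec (A := A) (ltok_gt (X := X)) w₂
      have he : EqvGen (AdjA A) w₁ w₂ := by
        have e2 : EqvGen (AdjA A) (Φ w₂) w₂ := EqvGen.symm _ _ (eqvGen_of_rtg_step ltok_gt h2.1)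
        rw [← heq] at e2
        exact EqvGen.trans _ _ _ (eqvGen_of_rtg_step ltok_gt h1.1) e2
      exact nf_unique ltok_lt he ((des_subset_iff T _).mp hd₁) ((des_subset_iff T _).mp hd₂)
    · -- surjective
      rintro w'' ⟨hw'', hasc⟩
      set w' := nfFun (A := A) (ltok_lt (X := X)) w'' with hw'def
      have h1 := nfFun_spec (A := A) (ltok_lt (X := X)) w''
      refine ⟨w', ⟨?_, ?_⟩, ?_⟩
      · exact equiv_trans hw'' (equiv_of_eqvGen (eqvGen_of_rtg_step ltok_lt h1.1))
      · exact (des_subset_iff T _).mpr h1.2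
      · -- Φ w' = w''
        have h2 := nfFun_spec (A := A) (ltok_gt (X := X)) w'
        have he : EqvGen (AdjA A) (Φ w') w'' := by
          refine EqvGen.trans _ _ _ (EqvGen.symm _ _ (eqvGen_of_rtg_step ltok_gt h2.1)) ?_
          exact EqvGen.symm _ _ (eqvGen_of_rtg_step ltok_lt h1.1)
        exact nf_unique ltok_gt he h2.2 ((asc_subset_iff T _).mp hasc)
  rw [← hbij.image_eq, Set.ncard_image_of_injOn hbij.injOn]

theorem ncard_sub_eq_sum (F : List X → Set ℕ) (w : List X) (T : Finset ℕ) :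
    {w' : List X | PCM.Equiv w w' ∧ F w' ⊆ ↑T}.ncard
      = ∑ T' ∈ T.powerset, {w' : List X | PCM.Equiv w w' ∧ F w' = ↑T'}.ncard := by
  classical
  set C : Finset (List X) := (equivClass_finite w).toFinset with hC
  set D : Finset ℕ → Finset (List X) := fun T' => C.filter (fun w' => F w' = ↑T') with hD
  have hmemC : ∀ x, x ∈ C ↔ PCM.Equiv w x := fun x => Set.Finite.mem_toFinset _
  have hDset : ∀ T' : Finset ℕ, {w' : List X | PCM.Equiv w w' ∧ F w' = ↑T'} = ↑(D T') := by
    intro T'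
    ext x
    simp only [Set.mem_setOf_eq, hD, Finset.coe_filter, hmemC]
  have hSset : {w' : List X | PCM.Equiv w w' ∧ F w' ⊆ ↑T} = ↑(T.powerset.biUnion D) := by
    ext x
    simp only [Set.mem_setOf_eq, Finset.coe_biUnion, Set.mem_iUnion, Finset.mem_coe,
      Finset.mem_powerset, hD, Finset.mem_filter, hmemC]
    constructor
    · rintro ⟨hx, hsub⟩
      refine ⟨T.filter (· ∈ F x), Finset.filter_subset _ _, hx, ?_⟩
      ext i
      simp only [Finset.coe_filter, Set.mem_setOf_eq, Set.mem_sep_iff, Finset.mem_coe]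
      exact ⟨fun h => ⟨hsub h, h⟩, fun h => h.2⟩
    · rintro ⟨T', hT', hx, hFx⟩
      exact ⟨hx, by rw [hFx]; exact_mod_cast Finset.coe_subset.mpr hT'⟩
  rw [hSset, Set.ncard_coe_finset]
  rw [Finset.card_biUnion]
  · refine Finset.sum_congr rfl fun T' _ => ?_
    rw [hDset, Set.ncard_coe_finset]
  · intro T₁ _ T₂ _ hne
    rw [Function.onFun, Finset.disjoint_left]
    intro x hx1 hx2
    simp only [hD, Finset.mem_filter] at hx1 hx2
    exact hne (Finset.coe_injective (hx1.2.symm.trans hx2.2))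

theorem count_ex (w : List X) (T : Finset ℕ) :
    {w' : List X | PCM.Equiv w w' ∧ PCM.DES w' = ↑T}.ncard
      = {w' : List X | PCM.Equiv w w' ∧ PCM.ASC w' = ↑T}.ncard := by
  classical
  induction T using Finset.strongInductionOn with
  | _ T IH =>
    have h1 := ncard_sub_eq_sum PCM.DES w T
    have h2 := ncard_sub_eq_sum PCM.ASC w T
    have h3 := count_sub w T
    rw [← Finset.sum_erase_add _ _ (Finset.mem_powerset_self T)] at h1 h2
    have h4 : ∑ T' ∈ T.powerset.erase T,
          {w' : List X | PCM.Equiv w w' ∧ PCM.DES w' = ↑T'}.ncard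
        = ∑ T' ∈ T.powerset.erase T,
          {w' : List X | PCM.Equiv w w' ∧ PCM.ASC w' = ↑T'}.ncard := by
      refine Finset.sum_congr rfl fun T' hT' => ?_
      rw [Finset.mem_erase, Finset.mem_powerset] at hT'
      exact IH T' (lt_of_le_of_ne hT'.2 hT'.1)
    omega

end PCMProof

/-- The set-valued statistics `DES` and `ASC` are equidistributed over each
equivalence class of `L(X, ≤)`. -/
theorem stmt_2 {X : Type*} [PartialOrder X] (w : List X) (S : Finset ℕ)
    (hS : ∀ i ∈ S, 0 < i) :
    {w' : List X | PCM.Equiv w w' ∧ PCM.DES w' = ↑S}.ncard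
      = {w' : List X | PCM.Equiv w w' ∧ PCM.ASC w' = ↑S}.ncard := by
  exact PCMProof.count_ex w S
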